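/- arXiv:2312.00704 — 2 statements merged into one kernel-verified Lean document; each statement's English description precedes it below -/
import Mathlib

section
/- For every integer k ≥ 1, every real λ > 0, and every integer n ≥ 1, the n-th factorial moment of the Poisson distribution of order k is given by the combinatorial sum M_(n)(k,λ) = n! · Σ_{(n_1,…,n_k) ∈ ℕ^k, n_1 + 2n_2 + ⋯ + k·n_k = n} ∏_{j=1}^k (λ^{n_j}/n_j!) · (C(k+1, j+1))^{n_j}. -/
set_option maxHeartbeats 1000000


open scoped BigOperators

/-- Probability mass function of the Poisson distribution of order `k` with rate `lam`:
`P_n(k,λ) = e^{-kλ} · Σ_{n₁+2n₂+⋯+k·n_k = n} ∏_{j=1}^k λ^{n_j}/n_j!`. -/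
noncomputable def poissonK (k : ℕ) (lam : ℝ) (n : ℕ) : ℝ :=
  Real.exp (-(k * lam)) *
    ∑ f ∈ Finset.filter (fun f : Fin k → ℕ => ∑ j : Fin k, (j.1 + 1) * f j = n)
        (Fintype.piFinset fun _ : Fin k => Finset.range (n + 1)),
      ∏ j : Fin k, lam ^ f j / (Nat.factorial (f j) : ℝ)

/-- The `n`-th factorial moment `M_(n)(k,λ) = Σ_{m=0}^∞ m·(m−1)⋯(m−n+1)·P_m(k,λ)`. -/
noncomputable def facMoment (k : ℕ) (lam : ℝ) (n : ℕ) : ℝ :=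
  ∑' m : ℕ, (Nat.descFactorial m n : ℝ) * poissonK k lam m

namespace PoissonFacAux

/-- weight of a multi-index -/
def wt (k : ℕ) (f : Fin k → ℕ) : ℕ := ∑ j : Fin k, (j.1 + 1) * f j

/-- the finite fiber of `wt` at `m` -/
def fiber (k m : ℕ) : Finset (Fin k → ℕ) :=
  Finset.filter (fun f : Fin k → ℕ => ∑ j : Fin k, (j.1 + 1) * f j = m)
    (Fintype.piFinset fun _ : Fin k => Finset.range (m + 1))

lemma hasSum_exp_div (μ : ℝ) : HasSum (fun t : ℕ => μ ^ t / t.factorial) (Real.exp μ) := by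
  rw [Real.exp_eq_exp_ℝ]
  exact NormedSpace.expSeries_div_hasSum_exp μ

lemma hasSum_pi {k : ℕ} (g : Fin k → ℕ → ℝ) (S : Fin k → ℝ)
    (h : ∀ j, HasSum (g j) (S j)) :
    HasSum (fun f : Fin k → ℕ => ∏ j, g j (f j)) (∏ j, S j) := by
  induction k with
  | zero =>
      have h1 := hasSum_single (f := fun f : Fin 0 → ℕ => ∏ j, g j (f j)) default
        (fun b hb => absurd (Subsingleton.elim b default) hb)
      simpa using h1
  | succ k ih =>
      have ihs := ih (fun j : Fin k => g j.succ) (fun j => S j.succ)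
        (fun j => h j.succ)
      have ihn := ih (fun j : Fin k => fun t => |g j.succ t|)
        (fun j => ∑' t, |g j.succ t|)
        (fun j => (summable_abs_iff.mpr (h j.succ).summable).hasSum)
      beta_reduce at ihs ihn
      have hnorm : Summable fun f : Fin k → ℕ => ‖∏ j : Fin k, g j.succ (f j)‖ := by
        refine ihn.summable.congr fun f => ?_
        rw [Real.norm_eq_abs, Finset.abs_prod]
      have h0n : Summable fun t : ℕ => ‖g 0 t‖ := by
        simpa [Real.norm_eq_abs] using summable_abs_iff.mpr (h 0).summable
      have hmul := (h 0).mul ihs (summable_mul_of_summable_norm (f := fun t : ℕ => g 0 t)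
          (g := fun f : Fin k → ℕ => ∏ j : Fin k, g j.succ (f j)) h0n hnorm)
      beta_reduce at hmul
      rw [Fin.prod_univ_succ S]
      refine ((Fin.consEquiv (fun _ : Fin (k+1) => ℕ)).hasSum_iff).mp ?_
      have e : ((fun f : Fin (k+1) → ℕ => ∏ j, g j (f j)) ∘
          (Fin.consEquiv fun _ : Fin (k+1) => ℕ)) =
          fun p : ℕ × (Fin k → ℕ) => g 0 p.1 * ∏ j : Fin k, g j.succ (p.2 j) := by
        funext p
        simp [Fin.consEquiv, Fin.prod_univ_succ]
      rw [e]
      exact hmul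

lemma mem_piFinset_of_wt {k m : ℕ} {f : Fin k → ℕ} (hf : wt k f = m) :
    f ∈ Fintype.piFinset fun _ : Fin k => Finset.range (m + 1) := by
  rw [Fintype.mem_piFinset]
  intro j
  rw [Finset.mem_range, Nat.lt_succ_iff, ← hf]
  calc f j ≤ (j.1 + 1) * f j := Nat.le_mul_of_pos_left _ (Nat.succ_pos _)
    _ ≤ wt k f := Finset.single_le_sum (f := fun j : Fin k => (j.1 + 1) * f j)
        (fun i _ => Nat.zero_le _) (Finset.mem_univ j)

lemma hasSum_fiber {k : ℕ} {q : (Fin k → ℕ) → ℝ} {S : ℝ} (hq : HasSum q S) :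
    HasSum (fun m => ∑ f ∈ fiber k m, q f) S := by
  have h := hq.tsum_fiberwise (wt k)
  have e : ∀ m : ℕ, (∑' f : (wt k ⁻¹' {m} : Set (Fin k → ℕ)), q ↑f)
      = ∑ f ∈ fiber k m, q f := by
    intro m
    rw [tsum_subtype]
    rw [tsum_eq_sum (s := fiber k m) ?_]
    · refine Finset.sum_congr rfl fun f hf => ?_
      have hw : wt k f = m := (Finset.mem_filter.mp hf).2
      exact Set.indicator_of_mem (by simp [hw]) q
    · intro f hf
      by_cases hw : wt k f = m
      · exact absurd (Finset.mem_filter.mpr ⟨mem_piFinset_of_wt hw, hw⟩) hf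
      · exact Set.indicator_of_notMem (by simp [hw]) q
  rw [show (fun m => ∑' f : (wt k ⁻¹' {m} : Set (Fin k → ℕ)), q ↑f)
      = fun m => ∑ f ∈ fiber k m, q f from funext e] at h
  exact h

/-- master lemma: the generating function of the fiber sums -/
lemma hasSum_gen {k : ℕ} (c : Fin k → ℝ) (x : ℝ) :
    HasSum (fun m => (∑ f ∈ fiber k m, ∏ j, (c j) ^ f j / (f j).factorial) * x ^ m)
      (∏ j : Fin k, Real.exp (c j * x ^ (j.1 + 1))) := by
  have h1 : HasSum (fun f : Fin k → ℕ => ∏ j, (c j * x ^ (j.1+1)) ^ f j / (f j).factorial)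
      (∏ j : Fin k, Real.exp (c j * x ^ (j.1+1))) :=
    hasSum_pi (fun j t => (c j * x ^ (j.1+1)) ^ t / t.factorial)
      (fun j => Real.exp (c j * x ^ (j.1+1))) (fun j => hasSum_exp_div _)
  have h2 : (fun f : Fin k → ℕ => ∏ j, (c j * x ^ (j.1+1)) ^ f j / (f j).factorial)
      = fun f => (∏ j, (c j) ^ f j / (f j).factorial) * x ^ wt k f := by
    funext f
    rw [wt, ← Finset.prod_pow_eq_pow_sum, ← Finset.prod_mul_distrib]
    refine Finset.prod_congr rfl fun j _ => ?_
    rw [mul_pow, pow_mul]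
    ring
  rw [h2] at h1
  have h3 := hasSum_fiber h1
  have e : ∀ m : ℕ, (∑ f ∈ fiber k m, (∏ j, (c j) ^ f j / (f j).factorial) * x ^ wt k f)
      = (∑ f ∈ fiber k m, ∏ j, (c j) ^ f j / (f j).factorial) * x ^ m := by
    intro m
    rw [Finset.sum_mul]
    refine Finset.sum_congr rfl fun f hf => ?_
    rw [show wt k f = m from (Finset.mem_filter.mp hf).2]
  rw [show (fun m => ∑ f ∈ fiber k m, (∏ j, (c j) ^ f j / (f j).factorial) * x ^ wt k f)
      = fun m => (∑ f ∈ fiber k m, ∏ j, (c j) ^ f j / (f j).factorial) * x ^ m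
      from funext e] at h3
  exact h3

lemma choose_le_two_pow (m i : ℕ) : m.choose i ≤ 2 ^ m := by
  rcases le_or_gt i m with h | h
  · calc m.choose i ≤ ∑ j ∈ Finset.range (m+1), m.choose j :=
        Finset.single_le_sum (fun j _ => Nat.zero_le _)
          (Finset.mem_range.mpr (Nat.lt_succ_of_le h))
    _ = 2 ^ m := Nat.sum_range_choose m
  · simp [Nat.choose_eq_zero_of_lt h]

lemma hasSum_shift {A : ℕ → ℝ} {G : ℝ → ℝ} (hA : ∀ m, 0 ≤ A m)
    (hG : ∀ x : ℝ, HasSum (fun m => A m * x ^ m) (G x)) (u : ℝ) :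
    HasSum (fun i => (∑' m, (m.choose i : ℝ) * A m) * u ^ i) (G (1 + u)) := by
  have hS : ∀ i : ℕ, Summable fun m => (m.choose i : ℝ) * A m := by
    intro i
    refine Summable.of_nonneg_of_le (fun m => mul_nonneg (by positivity) (hA m)) (fun m => ?_) (hG 2).summable
    calc (m.choose i : ℝ) * A m ≤ (2:ℝ) ^ m * A m := by
          have : ((m.choose i : ℕ) : ℝ) ≤ ((2 ^ m : ℕ) : ℝ) :=
            Nat.cast_le.mpr (choose_le_two_pow m i)
          push_cast at this
          exact mul_le_mul_of_nonneg_right this (hA m)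
      _ = A m * 2 ^ m := mul_comm _ _
  have key0 : ∀ (v : ℝ) (m : ℕ),
      ∑ i ∈ Finset.range (m+1), A m * ((m.choose i : ℝ) * v ^ i) = A m * (1+v) ^ m := by
    intro v m
    rw [← Finset.mul_sum]
    congr 1
    rw [add_comm (1:ℝ) v, add_pow]
    exact Finset.sum_congr rfl fun i _ => by ring
  have hz : ∀ (v : ℝ) (m : ℕ), ∀ i ∉ Finset.range (m+1),
      A m * ((m.choose i : ℝ) * v ^ i) = 0 := by
    intro v m i hi
    have hmi : m < i := by
      rcases Nat.lt_or_ge m i with h | h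
      · exact h
      · exact absurd (Finset.mem_range.mpr (Nat.lt_succ_of_le h)) hi
    simp [Nat.choose_eq_zero_of_lt hmi]
  have habs : Summable fun p : ℕ × ℕ => ‖A p.1 * ((p.1.choose p.2 : ℝ) * u ^ p.2)‖ := by
    have key : (fun p : ℕ × ℕ => ‖A p.1 * ((p.1.choose p.2 : ℝ) * u ^ p.2)‖)
        = fun p : ℕ × ℕ => A p.1 * ((p.1.choose p.2 : ℝ) * |u| ^ p.2) := by
      funext p
      rw [Real.norm_eq_abs, abs_mul, abs_of_nonneg (hA _), abs_mul, abs_pow, Nat.abs_cast]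
    rw [key]
    refine (summable_prod_of_nonneg (fun p => mul_nonneg (hA _) (by positivity))).mpr ⟨fun m => ?_, ?_⟩
    · exact summable_of_ne_finset_zero (s := Finset.range (m+1)) (hz |u| m)
    · have e : ∀ m : ℕ, ∑' i, A m * ((m.choose i : ℝ) * |u| ^ i) = A m * (1+|u|) ^ m := by
        intro m
        rw [tsum_eq_sum (hz |u| m), key0]
      rw [show (fun m => ∑' i, A m * ((m.choose i : ℝ) * |u| ^ i))
          = fun m => A m * (1+|u|) ^ m from funext e]
      exact (hG (1+|u|)).summable
  have hsum : Summable fun p : ℕ × ℕ => A p.1 * ((p.1.choose p.2 : ℝ) * u ^ p.2) :=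
    Summable.of_norm habs
  have h1 : HasSum (fun m => A m * (1+u) ^ m)
      (∑' p : ℕ × ℕ, A p.1 * ((p.1.choose p.2 : ℝ) * u ^ p.2)) := by
    refine HasSum.prod_fiberwise hsum.hasSum (fun m => ?_)
    have hfin : HasSum (fun i => A m * ((m.choose i : ℝ) * u ^ i))
        (∑ i ∈ Finset.range (m+1), A m * ((m.choose i : ℝ) * u ^ i)) :=
      hasSum_sum_of_ne_finset_zero (hz u m)
    rw [key0 u m] at hfin
    exact hfin
  have htot : HasSum (fun p : ℕ × ℕ => A p.1 * ((p.1.choose p.2 : ℝ) * u ^ p.2)) (G (1+u)) :=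
    (h1.unique (hG (1+u))) ▸ hsum.hasSum
  have hswap : HasSum (fun p : ℕ × ℕ => A p.2 * ((p.2.choose p.1 : ℝ) * u ^ p.1)) (G (1+u)) :=
    ((Equiv.prodComm ℕ ℕ).hasSum_iff).mpr htot
  refine HasSum.prod_fiberwise hswap (fun i => ?_)
  have h3 := ((hS i).hasSum).mul_right (u ^ i)
  have h4 : HasSum (fun m => A m * ((m.choose i : ℝ) * u ^ i))
      ((∑' m, (m.choose i : ℝ) * A m) * u ^ i) := by
    rw [show (fun m => A m * ((m.choose i : ℝ) * u ^ i))
        = fun m => ((m.choose i : ℝ) * A m) * u ^ i from funext fun m => by ring]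
    exact h3
  exact h4

lemma key_poly (k : ℕ) (u : ℝ) :
    (k : ℝ) + ∑ j ∈ Finset.range k, ((k+1).choose (j+2) : ℝ) * u ^ (j+1)
      = ∑ j ∈ Finset.range k, (1+u) ^ (j+1) := by
  induction k with
  | zero => simp
  | succ k ih =>
    have hb : (1+u) ^ (k+1) = ∑ i ∈ Finset.range (k+2), ((k+1).choose i : ℝ) * u ^ i := by
      rw [add_comm (1:ℝ) u, add_pow]
      exact Finset.sum_congr rfl fun i _ => by ring
    rw [Finset.sum_range_succ (f := fun j => (1+u) ^ (j+1)), ← ih, hb]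
    rw [Finset.sum_range_succ (f := fun j => ((k+1+1).choose (j+2) : ℝ) * u ^ (j+1))]
    rw [Finset.sum_range_succ' (f := fun i => ((k+1).choose i : ℝ) * u ^ i) (k+1)]
    rw [Finset.sum_range_succ (f := fun i => ((k+1).choose (i+1) : ℝ) * u ^ (i+1)) k]
    have pas : ∀ j ∈ Finset.range k, (((k+1+1).choose (j+2) : ℕ) : ℝ) * u ^ (j+1)
        = ((k+1).choose (j+1) : ℝ) * u ^ (j+1) + ((k+1).choose (j+2) : ℝ) * u ^ (j+1) := by
      intro j _
      rw [Nat.choose_succ_succ (k+1) (j+1)]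
      push_cast
      ring
    rw [Finset.sum_congr rfl pas, Finset.sum_add_distrib]
    simp only [Nat.choose_self, Nat.choose_zero_right, Nat.choose_succ_self_right]
    push_cast
    ring

noncomputable def Acoef (k : ℕ) (lam : ℝ) (m : ℕ) : ℝ :=
  ∑ f ∈ fiber k m, ∏ j, lam ^ f j / (f j).factorial

noncomputable def bvec (k : ℕ) (lam : ℝ) (i : ℕ) : ℝ := ∑' m, (m.choose i : ℝ) * Acoef k lam m

noncomputable def Dcoef (k : ℕ) (lam : ℝ) (i : ℕ) : ℝ :=
  ∑ g ∈ fiber k i, ∏ j : Fin k, (lam * ((k+1).choose (j.1+2) : ℝ)) ^ g j / (g j).factorial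

noncomputable def Gfun (k : ℕ) (lam x : ℝ) : ℝ := ∏ j : Fin k, Real.exp (lam * x ^ (j.1+1))

lemma hasSum_A (k : ℕ) (lam x : ℝ) :
    HasSum (fun m => Acoef k lam m * x ^ m) (Gfun k lam x) := by
  have h := hasSum_gen (k := k) (fun _ => lam) x
  simpa [Acoef, Gfun] using h

lemma G_shift (k : ℕ) (lam u : ℝ) :
    Real.exp (k * lam) *
        ∏ j : Fin k, Real.exp (lam * ((k+1).choose (j.1+2) : ℝ) * u ^ (j.1+1))
      = Gfun k lam (1+u) := by
  rw [Gfun, ← Real.exp_sum, ← Real.exp_sum, ← Real.exp_add]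
  congr 1
  have l1 : ∑ j : Fin k, lam * ((k+1).choose (j.1+2) : ℝ) * u ^ (j.1+1)
      = ∑ j ∈ Finset.range k, lam * ((k+1).choose (j+2) : ℝ) * u ^ (j+1) :=
    Fin.sum_univ_eq_sum_range (fun t => lam * ((k+1).choose (t+2) : ℝ) * u ^ (t+1)) k
  have l2 : ∑ j : Fin k, lam * (1+u) ^ (j.1+1)
      = ∑ j ∈ Finset.range k, lam * (1+u) ^ (j+1) :=
    Fin.sum_univ_eq_sum_range (fun t => lam * (1+u) ^ (t+1)) k
  have l3 : ∑ j ∈ Finset.range k, lam * ((k+1).choose (j+2) : ℝ) * u ^ (j+1)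
      = lam * ∑ j ∈ Finset.range k, ((k+1).choose (j+2) : ℝ) * u ^ (j+1) := by
    rw [Finset.mul_sum]
    exact Finset.sum_congr rfl fun j _ => by ring
  have l4 : ∑ j ∈ Finset.range k, lam * (1+u) ^ (j+1)
      = lam * ∑ j ∈ Finset.range k, (1+u) ^ (j+1) := by
    rw [Finset.mul_sum]
  rw [l1, l2, l3, l4, ← key_poly k u]
  ring

lemma hasSum_D (k : ℕ) (lam u : ℝ) :
    HasSum (fun i => (Real.exp (k * lam) * Dcoef k lam i) * u ^ i) (Gfun k lam (1+u)) := by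
  have h := hasSum_gen (k := k) (fun j : Fin k => lam * ((k+1).choose (j.1+2) : ℝ)) u
  have h2 : HasSum (fun i => Dcoef k lam i * u ^ i)
      (∏ j : Fin k, Real.exp (lam * ((k+1).choose (j.1+2) : ℝ) * u ^ (j.1+1))) := by
    simpa [Dcoef] using h
  have h3 := h2.mul_left (Real.exp (k * lam))
  rw [show (fun i => Real.exp (k*lam) * (Dcoef k lam i * u ^ i))
      = fun i => (Real.exp (k*lam) * Dcoef k lam i) * u ^ i from funext fun i => by ring] at h3
  rwa [G_shift k lam u] at h3

lemma hasFPS (b : ℕ → ℝ) (hb : ∀ i, 0 ≤ b i) {GG : ℝ → ℝ}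
    (h : ∀ u : ℝ, HasSum (fun i => b i * u ^ i) (GG (1+u))) :
    HasFPowerSeriesAt GG (FormalMultilinearSeries.ofScalars ℝ b) 1 := by
  refine HasFPowerSeriesOnBall.hasFPowerSeriesAt (r := 1) ?_
  constructor
  · have hsb : Summable b := by
      have := (h 1).summable
      simpa using this
    have hr := FormalMultilinearSeries.le_radius_of_summable_norm
      (FormalMultilinearSeries.ofScalars ℝ b) (r := 1) ?_
    · simpa using hr
    · simp only [FormalMultilinearSeries.ofScalars_norm, NNReal.coe_one, one_pow, mul_one]
      refine hsb.congr fun i => ?_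
      rw [Real.norm_eq_abs, abs_of_nonneg (hb i)]
  · exact zero_lt_one
  · intro y _
    have h2 := h y
    have e : (fun nn => (FormalMultilinearSeries.ofScalars ℝ b) nn fun _ => y)
        = fun i => b i * y ^ i := by
      funext i
      rw [FormalMultilinearSeries.ofScalars_apply_eq, smul_eq_mul]
    rw [e]
    exact h2

end PoissonFacAux

/-- Combinatorial sum for the factorial moments of the Poisson distribution of order `k`:
`M_(n) = n! · Σ_{n₁+2n₂+⋯+k·n_k = n} ∏_{j=1}^k (λ^{n_j}/n_j!) · C(k+1, j+1)^{n_j}`. -/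
theorem poissonK_facMoment_eq (k : ℕ) (hk : 1 ≤ k) (lam : ℝ) (hlam : 0 < lam)
    (n : ℕ) (hn : 1 ≤ n) :
    facMoment k lam n = (Nat.factorial n : ℝ) *
      ∑ f ∈ Finset.filter (fun f : Fin k → ℕ => ∑ j : Fin k, (j.1 + 1) * f j = n)
          (Fintype.piFinset fun _ : Fin k => Finset.range (n + 1)),
        ∏ j : Fin k,
          lam ^ f j / (Nat.factorial (f j) : ℝ) * (Nat.choose (k + 1) (j.1 + 2) : ℝ) ^ f j := by
  classical
  have hA : ∀ m, 0 ≤ PoissonFacAux.Acoef k lam m := by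
    intro m
    refine Finset.sum_nonneg fun f _ => Finset.prod_nonneg fun j _ => ?_
    positivity
  have hGA : ∀ x : ℝ, HasSum (fun m => PoissonFacAux.Acoef k lam m * x ^ m) (PoissonFacAux.Gfun k lam x) :=
    fun x => PoissonFacAux.hasSum_A k lam x
  have hbsum : ∀ u : ℝ, HasSum (fun i => PoissonFacAux.bvec k lam i * u ^ i) (PoissonFacAux.Gfun k lam (1+u)) :=
    fun u => PoissonFacAux.hasSum_shift hA hGA u
  have hbn : ∀ i, 0 ≤ PoissonFacAux.bvec k lam i := by
    intro i
    refine tsum_nonneg fun m => mul_nonneg (Nat.cast_nonneg _) (hA m)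
  have hdn : ∀ i, 0 ≤ Real.exp (k * lam) * PoissonFacAux.Dcoef k lam i := by
    intro i
    refine mul_nonneg (Real.exp_nonneg _) ?_
    refine Finset.sum_nonneg fun f _ => Finset.prod_nonneg fun j _ => ?_
    positivity
  have hP : HasFPowerSeriesAt (PoissonFacAux.Gfun k lam)
      (FormalMultilinearSeries.ofScalars ℝ (PoissonFacAux.bvec k lam)) 1 := PoissonFacAux.hasFPS _ hbn hbsum
  have hQ : HasFPowerSeriesAt (PoissonFacAux.Gfun k lam)
      (FormalMultilinearSeries.ofScalars ℝ (fun i => Real.exp (k * lam) * PoissonFacAux.Dcoef k lam i)) 1 :=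
    PoissonFacAux.hasFPS _ hdn (fun u => PoissonFacAux.hasSum_D k lam u)
  have heq : PoissonFacAux.bvec k lam = fun i => Real.exp (k * lam) * PoissonFacAux.Dcoef k lam i := by
    have h := hP.eq_formalMultilinearSeries hQ
    rwa [FormalMultilinearSeries.ofScalars_series_eq_iff] at h
  have hpk : ∀ m, poissonK k lam m = Real.exp (-(k * lam)) * PoissonFacAux.Acoef k lam m := fun m => rfl
  rw [facMoment]
  have hterm : ∀ m : ℕ, (Nat.descFactorial m n : ℝ) * poissonK k lam m
      = (Real.exp (-(k * lam)) * (n.factorial : ℝ)) * ((m.choose n : ℝ) * PoissonFacAux.Acoef k lam m) := by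
    intro m
    rw [hpk m, Nat.descFactorial_eq_factorial_mul_choose]
    push_cast
    ring
  rw [tsum_congr hterm, tsum_mul_left]
  have hbvn : (∑' m, (m.choose n : ℝ) * PoissonFacAux.Acoef k lam m) = PoissonFacAux.bvec k lam n := rfl
  rw [hbvn, congrFun heq n]
  have hDn : PoissonFacAux.Dcoef k lam n =
      ∑ f ∈ Finset.filter (fun f : Fin k → ℕ => ∑ j : Fin k, (j.1 + 1) * f j = n)
          (Fintype.piFinset fun _ : Fin k => Finset.range (n + 1)),
        ∏ j : Fin k,
          lam ^ f j / (Nat.factorial (f j) : ℝ) * (Nat.choose (k + 1) (j.1 + 2) : ℝ) ^ f j := by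
    rw [PoissonFacAux.Dcoef]
    refine Finset.sum_congr rfl fun f _ => Finset.prod_congr rfl fun j _ => ?_
    rw [mul_pow]
    ring
  rw [hDn]
  set T := ∑ f ∈ Finset.filter (fun f : Fin k → ℕ => ∑ j : Fin k, (j.1 + 1) * f j = n)
          (Fintype.piFinset fun _ : Fin k => Finset.range (n + 1)),
        ∏ j : Fin k,
          lam ^ f j / (Nat.factorial (f j) : ℝ) * (Nat.choose (k + 1) (j.1 + 2) : ℝ) ^ f j
  calc Real.exp (-(k * lam)) * (n.factorial : ℝ) * (Real.exp (k * lam) * T)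
      = (Real.exp (-(k * lam)) * Real.exp (k * lam)) * ((n.factorial : ℝ) * T) := by ring
    _ = (n.factorial : ℝ) * T := by rw [← Real.exp_add]; simp
end

section
/- For every integer k ≥ 1 and every integer n ≥ 2, there exists a real polynomial p (depending only on n and k) such that: p has degree exactly ⌊n/2⌋, p has zero constant term, the coefficient of the linear term of p equals 𝓢_n(k), and for every real λ > 0 the n-th central moment of the Poisson distribution of order k equals p(λ). -/
open scoped BigOperators

/-- The `n`-th central moment `M̃_n(k,λ) = Σ_{m=0}^∞ (m − μ(k,λ))^n·P_m(k,λ)`,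
where `μ(k,λ) = k(k+1)λ/2` is the mean. -/
noncomputable def centralMoment (k : ℕ) (lam : ℝ) (n : ℕ) : ℝ :=
  ∑' m : ℕ, ((m : ℝ) - k * (k + 1) * lam / 2) ^ n * poissonK k lam m

/-- The power sum `𝓢_j(k) = Σ_{s=1}^k s^j`. -/
def powerSum (k j : ℕ) : ℕ := ∑ s ∈ Finset.Icc 1 k, s ^ j

open Polynomial



namespace PKAux

/-- Central-moment polynomials of the 1-dim Poisson distribution (up to `e^λ`). -/
noncomputable def Q : ℕ → Polynomial ℝ
  | 0 => 1
  | (r+1) => Polynomial.X * ∑ i ∈ (Finset.range r).attach,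
      ((r.choose i.1 : ℝ)) • Q i.1
  decreasing_by have := i.2; simp only [Finset.mem_range] at this; omega

lemma Q_zero : Q 0 = 1 := by rw [Q]

lemma Q_succ (r : ℕ) : Q (r+1) = Polynomial.X *
    ∑ i ∈ Finset.range r, ((r.choose i : ℝ)) • Q i := by
  rw [Q, ← Finset.sum_attach (Finset.range r) (fun i => ((r.choose i : ℝ)) • Q i)]

lemma Q_one : Q 1 = 0 := by simp [Q_succ]

end PKAux

namespace PKAux

lemma Q_props : ∀ r : ℕ,
    (∀ i, 0 ≤ (Q r).coeff i) ∧
    (Q r).natDegree ≤ r / 2 ∧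
    (r ≠ 1 → 0 < (Q r).coeff (r / 2)) ∧
    (1 ≤ r → (Q r).coeff 0 = 0) ∧
    (2 ≤ r → (Q r).coeff 1 = 1) := by
  intro r
  induction r using Nat.strong_induction_on with
  | _ r IH =>
    by_cases h0 : r = 0
    · subst h0
      refine ⟨?_, ?_, ?_, ?_, ?_⟩ <;> simp [Q_zero, Polynomial.coeff_one]
      intro i; positivity
    by_cases h1 : r = 1
    · subst h1
      refine ⟨?_, ?_, ?_, ?_, ?_⟩ <;> simp [Q_one]
    obtain ⟨s, rfl⟩ : ∃ s, r = s + 1 := ⟨r - 1, by omega⟩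
    have hs1 : 1 ≤ s := by omega
    · set S : Polynomial ℝ := ∑ i ∈ Finset.range s, ((s.choose i : ℝ)) • Q i with hS
      have coeffS : ∀ j, S.coeff j
          = ∑ i ∈ Finset.range s, (s.choose i : ℝ) * (Q i).coeff j := by
        intro j
        simp [hS, Polynomial.finset_sum_coeff, Polynomial.coeff_smul, smul_eq_mul]
      have Snn : ∀ j, 0 ≤ S.coeff j := by
        intro j
        rw [coeffS]
        refine Finset.sum_nonneg fun i hi => ?_
        have := (IH i (by simp at hi; omega)).1 j
        positivity
      set d := (s-1)/2 with hd
      have Shigh : ∀ j, d < j → S.coeff j = 0 := by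
        intro j hj
        rw [coeffS]
        refine Finset.sum_eq_zero fun i hi => ?_
        have hi' : i < s := by simpa using hi
        have hdeg : (Q i).natDegree ≤ i / 2 := (IH i (by omega)).2.1
        have : (Q i).natDegree < j := by omega
        rw [Polynomial.coeff_eq_zero_of_natDegree_lt this, mul_zero]
      have SdegLe : S.natDegree ≤ d :=
        Polynomial.natDegree_le_iff_coeff_eq_zero.2 fun j hj => Shigh j hj
      have Spos : 0 < S.coeff d := by
        rw [coeffS]
        set w := if s ≤ 2 then 0 else s - 1 with hw
        have hwmem : w ∈ Finset.range s := by
          simp only [hw]; split <;> simp <;> omega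
        have hwpos : 0 < (s.choose w : ℝ) * (Q w).coeff d := by
          rcases le_or_gt s 2 with h2 | h2
          · have hw0 : w = 0 := by simp [hw, h2]
            have hd0 : d = 0 := by omega
            simp [hw0, hd0, Q_zero]
          · have hw0 : w = s - 1 := by simp [hw]; omega
            have hwne : w ≠ 1 := by omega
            have hdw : d = w / 2 := by omega
            have hpos := (IH w (by omega)).2.2.1 hwne
            have hch : 0 < (s.choose w : ℝ) := by
              have : 0 < s.choose w := Nat.choose_pos (by omega)
              exact_mod_cast this
            rw [hdw]
            positivity
        calc (0:ℝ) < (s.choose w : ℝ) * (Q w).coeff d := hwpos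
          _ ≤ _ := Finset.single_le_sum (f := fun i => (s.choose i : ℝ) * (Q i).coeff d)
              (fun i hi => by
                have := (IH i (by simp at hi; omega)).1 d
                positivity) hwmem
      have hQ : Q (s+1) = Polynomial.X * S := Q_succ s
      have hco0 : (Q (s+1)).coeff 0 = 0 := by
        rw [hQ, Polynomial.mul_coeff_zero, Polynomial.coeff_X_zero, zero_mul]
      refine ⟨?_, ?_, ?_, fun _ => hco0, ?_⟩
      · intro i
        match i with
        | 0 => rw [hco0]
        | (i+1) => rw [hQ, Polynomial.coeff_X_mul]; exact Snn i
      · calc (Q (s+1)).natDegree ≤ Polynomial.X.natDegree + S.natDegree := by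
              rw [hQ]; exact Polynomial.natDegree_mul_le
          _ ≤ 1 + d := by rw [Polynomial.natDegree_X]; omega
          _ ≤ (s+1)/2 := by omega
      · intro _
        have : (s+1)/2 = d + 1 := by omega
        rw [this, hQ, Polynomial.coeff_X_mul]
        exact Spos
      · intro _
        rw [hQ, Polynomial.coeff_X_mul, coeffS]
        rw [Finset.sum_eq_single_of_mem 0 (by simp; omega)]
        · simp [Q_zero]
        · intro i hi hne
          have h1 : 1 ≤ i := by omega
          rw [(IH i (by simp at hi; omega)).2.2.2.1 h1, mul_zero]

end PKAux

namespace PKAux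
variable {lam : ℝ}

noncomputable def pois (lam : ℝ) (m : ℕ) : ℝ := lam ^ m / (m.factorial : ℝ)

lemma pois_nonneg (hlam : 0 ≤ lam) (m : ℕ) : 0 ≤ pois lam m := by
  unfold pois; positivity

lemma summable_pow_mul (hlam : 0 ≤ lam) (i : ℕ) :
    Summable fun m : ℕ => (m:ℝ) ^ i * pois lam m := by
  refine Summable.of_nonneg_of_le (fun m => by have := pois_nonneg hlam m; positivity)
    (fun m => ?_) (Real.summable_pow_div_factorial ((2:ℝ)^i * lam))
  have h1 : (m:ℝ) ≤ (2:ℝ) ^ m := by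
    calc (m:ℝ) ≤ ((2^m : ℕ) : ℝ) := by exact_mod_cast (Nat.lt_two_pow_self).le
    _ = (2:ℝ)^m := by push_cast; ring
  have h2 : (m:ℝ) ^ i ≤ ((2:ℝ)^i)^m := by
    calc (m:ℝ)^i ≤ ((2:ℝ)^m)^i := by
          exact pow_le_pow_left₀ (by positivity) h1 i
      _ = ((2:ℝ)^i)^m := by rw [← pow_mul, ← pow_mul, Nat.mul_comm]
  calc (m:ℝ)^i * pois lam m ≤ ((2:ℝ)^i)^m * pois lam m := by
        refine mul_le_mul_of_nonneg_right h2 (pois_nonneg hlam m)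
    _ = ((2:ℝ)^i * lam)^m / (m.factorial : ℝ) := by
        unfold pois; rw [mul_pow]; ring

lemma summable_shiftpow (hlam : 0 ≤ lam) (r : ℕ) :
    Summable fun m : ℕ => ((m:ℝ) + lam) ^ r * pois lam m := by
  have : ∀ m : ℕ, ((m:ℝ) + lam) ^ r * pois lam m
      = ∑ i ∈ Finset.range (r+1), ((m:ℝ)^i * pois lam m) * (lam ^ (r-i) * (r.choose i : ℝ)) := by
    intro m
    rw [add_pow, Finset.sum_mul]
    refine Finset.sum_congr rfl fun i _ => by ring
  refine Summable.congr (summable_sum fun i _ => ?_) fun m => (this m).symm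
  exact (summable_pow_mul hlam i).mul_right _

lemma abs_sub_le_add (hlam : 0 ≤ lam) (m : ℕ) : |(m:ℝ) - lam| ≤ (m:ℝ) + lam := by
  have := abs_sub (m:ℝ) lam
  calc |(m:ℝ) - lam| ≤ |(m:ℝ)| + |lam| := abs_sub _ _
    _ = (m:ℝ) + lam := by rw [abs_of_nonneg (by positivity), abs_of_nonneg hlam]

lemma summable_absmom (hlam : 0 ≤ lam) (r : ℕ) :
    Summable fun m : ℕ => |(m:ℝ) - lam| ^ r * pois lam m := by
  refine Summable.of_nonneg_of_le (fun m => by have := pois_nonneg hlam m; positivity)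
    (fun m => ?_) (summable_shiftpow hlam r)
  exact mul_le_mul_of_nonneg_right
    (pow_le_pow_left₀ (abs_nonneg _) (abs_sub_le_add hlam m) r) (pois_nonneg hlam m)

lemma summable_mom (hlam : 0 ≤ lam) (r : ℕ) :
    Summable fun m : ℕ => ((m:ℝ) - lam) ^ r * pois lam m := by
  rw [← summable_abs_iff]
  refine (summable_absmom hlam r).congr fun m => ?_
  rw [abs_mul, abs_pow, abs_of_nonneg (pois_nonneg hlam m)]

lemma summable_mulmom (hlam : 0 ≤ lam) (r : ℕ) :
    Summable fun m : ℕ => (m:ℝ) * ((m:ℝ) - lam) ^ r * pois lam m := by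
  rw [← summable_abs_iff]
  refine Summable.of_nonneg_of_le (fun m => abs_nonneg _) (fun m => ?_)
    (summable_shiftpow hlam (r+1))
  rw [abs_mul, abs_mul, abs_of_nonneg (pois_nonneg hlam m), abs_of_nonneg
    (by positivity : (0:ℝ) ≤ (m:ℝ)), abs_pow]
  have h1 : (m:ℝ) * |(m:ℝ) - lam| ^ r ≤ ((m:ℝ) + lam) ^ (r+1) := by
    rw [pow_succ']
    refine mul_le_mul (by linarith) (pow_le_pow_left₀ (abs_nonneg _)
      (abs_sub_le_add hlam m) r) (by positivity) (by positivity)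
  exact mul_le_mul_of_nonneg_right h1 (pois_nonneg hlam m)

noncomputable def cmom (lam : ℝ) (r : ℕ) : ℝ := ∑' m : ℕ, ((m:ℝ) - lam) ^ r * pois lam m

lemma cmom_zero : cmom lam 0 = Real.exp lam := by
  have h : Real.exp lam = ∑' m : ℕ, lam ^ m / (m.factorial : ℝ) := by
    rw [Real.exp_eq_exp_ℝ, NormedSpace.exp_eq_tsum_div]
  rw [cmom, h]
  simp [pois]

end PKAux

namespace PKAux

lemma tsum_mul_shift (hlam : 0 ≤ lam) (r : ℕ) :
    ∑' m : ℕ, (m:ℝ) * ((m:ℝ) - lam) ^ r * pois lam m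
      = lam * ∑' m : ℕ, ((m:ℝ) + 1 - lam) ^ r * pois lam m := by
  rw [Summable.tsum_eq_zero_add (summable_mulmom hlam r)]
  simp only [Nat.cast_zero, zero_mul, zero_add]
  rw [← tsum_mul_left]
  refine tsum_congr fun m => ?_
  have hfac : ((m+1).factorial : ℝ) = ((m:ℝ)+1) * (m.factorial : ℝ) := by
    rw [Nat.factorial_succ]; push_cast; ring
  have hmfac : (0:ℝ) < (m.factorial : ℝ) := by exact_mod_cast m.factorial_pos
  unfold pois
  rw [hfac]
  push_cast
  rw [pow_succ]
  field_simp

lemma cmom_succ (hlam : 0 ≤ lam) (r : ℕ) :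
    cmom lam (r+1) = lam * ∑ i ∈ Finset.range r, (r.choose i : ℝ) * cmom lam i := by
  have hsplit : cmom lam (r+1)
      = (∑' m : ℕ, (m:ℝ) * ((m:ℝ) - lam) ^ r * pois lam m) - lam * cmom lam r := by
    unfold cmom
    rw [← tsum_mul_left, ← Summable.tsum_sub (summable_mulmom hlam r)
      ((summable_mom hlam r).mul_left lam)]
    refine tsum_congr fun m => ?_
    rw [pow_succ]
    ring
  have hexp : ∑' m : ℕ, ((m:ℝ) + 1 - lam) ^ r * pois lam m
      = ∑ i ∈ Finset.range (r+1), (r.choose i : ℝ) * cmom lam i := by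
    have hpt : ∀ m : ℕ, ((m:ℝ) + 1 - lam) ^ r * pois lam m
        = ∑ i ∈ Finset.range (r+1),
            (((m:ℝ) - lam) ^ i * pois lam m) * (r.choose i : ℝ) := by
      intro m
      have : ((m:ℝ) + 1 - lam) = ((m:ℝ) - lam) + 1 := by ring
      rw [this, add_pow, Finset.sum_mul]
      refine Finset.sum_congr rfl fun i _ => by ring
    rw [tsum_congr hpt, Summable.tsum_finsetSum (fun i _ => (summable_mom hlam i).mul_right _)]
    refine Finset.sum_congr rfl fun i _ => ?_
    rw [tsum_mul_right, cmom]
    ring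
  rw [hsplit, tsum_mul_shift hlam r, hexp, Finset.sum_range_succ, Nat.choose_self]
  unfold cmom
  ring

lemma cmom_eq (hlam : 0 ≤ lam) : ∀ r : ℕ, cmom lam r = Real.exp lam * (Q r).eval lam := by
  intro r
  induction r using Nat.strong_induction_on with
  | _ r IH =>
    match r with
    | 0 => simp [cmom_zero, Q_zero]
    | (s+1) =>
      have hsum : ∑ i ∈ Finset.range s, (s.choose i : ℝ) * cmom lam i
          = ∑ i ∈ Finset.range s, (s.choose i : ℝ) * (Real.exp lam * (Q i).eval lam) :=
        Finset.sum_congr rfl fun i hi => by rw [IH i (by simp at hi; omega)]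
      rw [cmom_succ hlam s, hsum, Q_succ, Polynomial.eval_mul, Polynomial.eval_X,
        Polynomial.eval_finset_sum]
      simp only [Finset.mul_sum]
      refine Finset.sum_congr rfl fun i _ => ?_
      simp only [Polynomial.eval_smul, smul_eq_mul]
      ring

end PKAux

namespace PKAux

lemma coeff_mul_one' (p q : Polynomial ℝ) :
    (p*q).coeff 1 = p.coeff 0 * q.coeff 1 + p.coeff 1 * q.coeff 0 := by
  rw [Polynomial.coeff_mul, Finset.Nat.sum_antidiagonal_succ]
  simp

noncomputable def R : ℕ → ℕ → Polynomial ℝ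
  | 0, n => if n = 0 then 1 else 0
  | (k+1), n => ∑ i ∈ Finset.range (n+1),
      ((n.choose i : ℝ) * ((k:ℝ)+1) ^ (n-i)) • (R k i * Q (n-i))

lemma R_zero (n : ℕ) : R 0 n = if n = 0 then 1 else 0 := by rw [R]

lemma R_succ (k n : ℕ) : R (k+1) n = ∑ i ∈ Finset.range (n+1),
    ((n.choose i : ℝ) * ((k:ℝ)+1) ^ (n-i)) • (R k i * Q (n-i)) := by rw [R]

lemma coeff_mul_nonneg {p q : Polynomial ℝ} (hp : ∀ i, 0 ≤ p.coeff i)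
    (hq : ∀ i, 0 ≤ q.coeff i) (i : ℕ) : 0 ≤ (p*q).coeff i := by
  rw [Polynomial.coeff_mul]
  exact Finset.sum_nonneg fun x _ => mul_nonneg (hp _) (hq _)

lemma R_coeff_nonneg : ∀ k n i, 0 ≤ (R k n).coeff i := by
  intro k
  induction k with
  | zero =>
    intro n i; rw [R_zero]
    split <;> simp [Polynomial.coeff_one] <;> positivity
  | succ k IH =>
    intro n i
    rw [R_succ, Polynomial.finset_sum_coeff]
    refine Finset.sum_nonneg fun j _ => ?_
    rw [Polynomial.coeff_smul, smul_eq_mul]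
    have h1 : (0:ℝ) ≤ (n.choose j : ℝ) * ((k:ℝ)+1) ^ (n-j) := by positivity
    exact mul_nonneg h1 (coeff_mul_nonneg (IH j) (fun t => (Q_props (n-j)).1 t) i)

lemma R_natDegree_le : ∀ k n, (R k n).natDegree ≤ n / 2 := by
  intro k
  induction k with
  | zero =>
    intro n; rw [R_zero]; split <;> simp
  | succ k IH =>
    intro n
    refine Polynomial.natDegree_le_iff_coeff_eq_zero.2 fun j hj => ?_
    rw [R_succ, Polynomial.finset_sum_coeff]
    refine Finset.sum_eq_zero fun i hi => ?_
    simp only [Finset.mem_range] at hi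
    rw [Polynomial.coeff_smul, smul_eq_mul]
    have hdeg : (R k i * Q (n-i)).natDegree ≤ i/2 + (n-i)/2 :=
      le_trans Polynomial.natDegree_mul_le (add_le_add (IH i) (Q_props (n-i)).2.1)
    have : (R k i * Q (n-i)).natDegree < j := by omega
    rw [Polynomial.coeff_eq_zero_of_natDegree_lt this, mul_zero]

lemma R_zeroth : ∀ k, R k 0 = 1 := by
  intro k
  induction k with
  | zero => simp [R_zero]
  | succ k IH => simp [R_succ, IH, Q_zero]

lemma R_one : ∀ k, R k 1 = 0 := by
  intro k
  induction k with
  | zero => simp [R_zero]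
  | succ k IH =>
    rw [R_succ]
    rw [Finset.sum_range_succ, Finset.sum_range_one]
    simp [R_zeroth, Q_zero, Q_one, IH]

lemma R_coeff_zero : ∀ k n, 1 ≤ n → (R k n).coeff 0 = 0 := by
  intro k
  induction k with
  | zero => intro n hn; rw [R_zero, if_neg (by omega)]; simp
  | succ k IH =>
    intro n hn
    rw [R_succ, Polynomial.finset_sum_coeff]
    refine Finset.sum_eq_zero fun i hi => ?_
    simp only [Finset.mem_range] at hi
    rw [Polynomial.coeff_smul, smul_eq_mul, Polynomial.mul_coeff_zero]
    rcases Nat.eq_zero_or_pos i with rfl | hipos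
    · rw [(Q_props (n-0)).2.2.2.1 (by omega), mul_zero, mul_zero]
    · rw [IH i hipos, zero_mul, mul_zero]

lemma R_coeff_one : ∀ k n, 2 ≤ n → (R k n).coeff 1 = ∑ j ∈ Finset.range k, ((j:ℝ)+1)^n := by
  intro k
  induction k with
  | zero => intro n hn; rw [R_zero, if_neg (by omega)]; simp
  | succ k IH =>
    intro n hn
    rw [R_succ, Polynomial.finset_sum_coeff]
    have hterm : ∀ i ∈ Finset.range (n+1),
        (((n.choose i : ℝ) * ((k:ℝ)+1) ^ (n-i)) • (R k i * Q (n-i))).coeff 1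
        = (n.choose i : ℝ) * ((k:ℝ)+1) ^ (n-i) *
          ((R k i).coeff 0 * (Q (n-i)).coeff 1 + (R k i).coeff 1 * (Q (n-i)).coeff 0) :=
      fun i _ => by rw [Polynomial.coeff_smul, smul_eq_mul, coeff_mul_one']
    rw [Finset.sum_congr rfl hterm]
    have hsub : ({0, n} : Finset ℕ) ⊆ Finset.range (n+1) := by
      intro x hx; simp only [Finset.mem_insert, Finset.mem_singleton] at hx
      rcases hx with rfl | rfl <;> simp
    rw [← Finset.sum_subset hsub (fun i hi hni => ?_)]
    · rw [Finset.sum_pair (by omega : (0:ℕ) ≠ n)]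
      rw [R_zeroth k]
      rw [IH n hn]
      simp only [Nat.choose_zero_right, Nat.choose_self, Nat.sub_zero, Nat.sub_self,
        Q_zero, Polynomial.coeff_one, Nat.cast_one, pow_zero]
      rw [(Q_props n).2.2.2.2 hn]
      norm_num
      rw [Finset.sum_range_succ]
      push_cast
      ring
    · simp only [Finset.mem_range] at hi
      simp only [Finset.mem_insert, Finset.mem_singleton, not_or] at hni
      rw [R_coeff_zero k i (by omega), (Q_props (n-i)).2.2.2.1 (by omega),
        zero_mul, mul_zero, add_zero, mul_zero]

lemma R_coeff_top (k n : ℕ) (hk : 1 ≤ k) (hn : 2 ≤ n) : 0 < (R k n).coeff (n/2) := by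
  obtain ⟨k, rfl⟩ : ∃ k', k = k' + 1 := ⟨k - 1, by omega⟩
  rw [R_succ, Polynomial.finset_sum_coeff]
  have hnn : ∀ i ∈ Finset.range (n+1),
      0 ≤ (((n.choose i : ℝ) * ((k:ℝ)+1) ^ (n-i)) • (R k i * Q (n-i))).coeff (n/2) := by
    intro i _
    rw [Polynomial.coeff_smul, smul_eq_mul]
    have h1 : (0:ℝ) ≤ (n.choose i : ℝ) * ((k:ℝ)+1) ^ (n-i) := by positivity
    exact mul_nonneg h1 (coeff_mul_nonneg (R_coeff_nonneg k i)
      (fun t => (Q_props (n-i)).1 t) _)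
  have h0 : 0 < (((n.choose 0 : ℝ) * ((k:ℝ)+1) ^ (n-0)) • (R k 0 * Q (n-0))).coeff (n/2) := by
    rw [Polynomial.coeff_smul, smul_eq_mul, R_zeroth, one_mul]
    simp only [Nat.choose_zero_right, Nat.cast_one, one_mul, Nat.sub_zero]
    have := (Q_props n).2.2.1 (by omega)
    positivity
  calc (0:ℝ) < _ := h0
    _ ≤ _ := Finset.single_le_sum hnn (by simp)

end PKAux

namespace PKAux

def Yw (k : ℕ) (f : Fin k → ℕ) : ℕ := ∑ j : Fin k, (j.1 + 1) * f j

noncomputable def PP (lam : ℝ) {k : ℕ} (f : Fin k → ℕ) : ℝ := ∏ j : Fin k, pois lam (f j)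

noncomputable def Mk (k : ℕ) (lam : ℝ) : ℝ := lam * ∑ j : Fin k, ((j.1 : ℝ) + 1)

noncomputable def F (k n : ℕ) (lam : ℝ) (f : Fin k → ℕ) : ℝ :=
  ((Yw k f : ℝ) - Mk k lam) ^ n * PP lam f

lemma PP_nonneg {k : ℕ} (hlam : 0 ≤ lam) (f : Fin k → ℕ) : 0 ≤ PP lam f :=
  Finset.prod_nonneg fun j _ => pois_nonneg hlam (f j)

def snocEquiv (k : ℕ) : (Fin (k+1) → ℕ) ≃ (Fin k → ℕ) × ℕ where
  toFun f := (fun j => f j.castSucc, f (Fin.last k))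
  invFun p := Fin.snoc p.1 p.2
  left_inv f := by
    funext j
    refine Fin.lastCases ?_ ?_ j
    · simp
    · intro i; simp
  right_inv p := by
    refine Prod.ext ?_ ?_
    · funext j; simp
    · simp

lemma Yw_snoc (k : ℕ) (g : Fin k → ℕ) (m : ℕ) :
    Yw (k+1) (Fin.snoc g m) = Yw k g + (k+1)*m := by
  unfold Yw
  rw [Fin.sum_univ_castSucc]
  simp

lemma PP_snoc (lam : ℝ) (k : ℕ) (g : Fin k → ℕ) (m : ℕ) :
    PP lam (Fin.snoc g m) = PP lam g * pois lam m := by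
  unfold PP
  rw [Fin.prod_univ_castSucc]
  simp

lemma Mk_succ (k : ℕ) (lam : ℝ) : Mk (k+1) lam = Mk k lam + lam * ((k:ℝ)+1) := by
  unfold Mk
  rw [Fin.sum_univ_castSucc]
  simp
  ring

lemma F_snoc (k n : ℕ) (lam : ℝ) (g : Fin k → ℕ) (m : ℕ) :
    F (k+1) n lam (Fin.snoc g m)
      = (((Yw k g : ℝ) - Mk k lam) + ((k:ℝ)+1) * ((m:ℝ) - lam)) ^ n
          * (PP lam g * pois lam m) := by
  unfold F
  rw [Yw_snoc, PP_snoc, Mk_succ]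
  push_cast
  ring_nf

end PKAux

namespace PKAux

noncomputable def Af (k : ℕ) (lam : ℝ) (g : Fin k → ℕ) : ℝ := (Yw k g : ℝ) - Mk k lam
noncomputable def Bf (k : ℕ) (lam : ℝ) (m : ℕ) : ℝ := ((k:ℝ)+1) * ((m:ℝ) - lam)

lemma F_eq (k n : ℕ) (lam : ℝ) (g : Fin k → ℕ) :
    F k n lam g = Af k lam g ^ n * PP lam g := rfl

lemma F_snoc' (k n : ℕ) (lam : ℝ) (g : Fin k → ℕ) (m : ℕ) :
    F (k+1) n lam (Fin.snoc g m)
      = (Af k lam g + Bf k lam m) ^ n * (PP lam g * pois lam m) := F_snoc k n lam g m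

lemma main (lam : ℝ) (hlam : 0 < lam) : ∀ k : ℕ,
    (∀ n, Summable fun f : Fin k → ℕ => |F k n lam f|) ∧
    (∀ n, ∑' f : Fin k → ℕ, F k n lam f = Real.exp (k * lam) * ((R k n).eval lam)) := by
  have hlam' : 0 ≤ lam := hlam.le
  intro k
  induction k with
  | zero =>
    constructor
    · intro n; exact Summable.of_finite
    · intro n
      rw [tsum_eq_single (fun j => 0) (fun b hb => absurd (Subsingleton.elim b _) hb)]
      have h0 : F 0 n lam (fun _ => 0) = (0:ℝ) ^ n := by
        unfold F Yw PP Mk; simp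
      rw [h0]
      rw [R_zero]
      cases n with
      | zero => simp
      | succ n => simp [zero_pow]
  | succ k IH =>
    have hφ : ∀ i, Summable fun g : Fin k → ℕ => |Af k lam g| ^ i * PP lam g := by
      intro i
      refine (IH.1 i).congr fun g => ?_
      rw [F_eq, abs_mul, abs_pow, abs_of_nonneg (PP_nonneg hlam' g)]
    have hψ : ∀ j, Summable fun m : ℕ => |Bf k lam m| ^ j * pois lam m := by
      intro j
      refine (Summable.mul_left (((k:ℝ)+1)^j) (summable_absmom hlam' j)).congr fun m => ?_
      unfold Bf
      rw [abs_mul, mul_pow, abs_of_nonneg (by positivity : (0:ℝ) ≤ (k:ℝ)+1)]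
      ring
    have hφn : ∀ i, Summable fun g : Fin k → ℕ => ‖Af k lam g ^ i * PP lam g‖ := by
      intro i
      refine (hφ i).congr fun g => ?_
      rw [Real.norm_eq_abs, abs_mul, abs_pow, abs_of_nonneg (PP_nonneg hlam' g)]
    have hψn : ∀ j, Summable fun m : ℕ => ‖Bf k lam m ^ j * pois lam m‖ := by
      intro j
      refine (hψ j).congr fun m => ?_
      rw [Real.norm_eq_abs, abs_mul, abs_pow, abs_of_nonneg (pois_nonneg hlam' m)]
    have hsummax : ∀ n, Summable fun f : Fin (k+1) → ℕ => |F (k+1) n lam f| := by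
      intro n
      rw [← (snocEquiv k).symm.summable_iff]
      have hle : ∀ p : (Fin k → ℕ) × ℕ,
          |F (k+1) n lam ((snocEquiv k).symm p)|
            ≤ ∑ i ∈ Finset.range (n+1), (n.choose i : ℝ) *
                ((|Af k lam p.1| ^ i * PP lam p.1) *
                  (|Bf k lam p.2| ^ (n-i) * pois lam p.2)) := by
        rintro ⟨g, m⟩
        show |F (k+1) n lam (Fin.snoc g m)| ≤ _
        rw [F_snoc', abs_mul]
        have h2 : |PP lam g * pois lam m| = PP lam g * pois lam m :=
          abs_of_nonneg (mul_nonneg (PP_nonneg hlam' g) (pois_nonneg hlam' m))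
        rw [h2]
        have h1 : |(Af k lam g + Bf k lam m) ^ n| ≤ (|Af k lam g| + |Bf k lam m|) ^ n := by
          rw [abs_pow]
          exact pow_le_pow_left₀ (abs_nonneg _) (abs_add_le _ _) n
        calc |(Af k lam g + Bf k lam m) ^ n| * (PP lam g * pois lam m)
            ≤ (|Af k lam g| + |Bf k lam m|) ^ n * (PP lam g * pois lam m) :=
              mul_le_mul_of_nonneg_right h1
                (mul_nonneg (PP_nonneg hlam' g) (pois_nonneg hlam' m))
          _ = _ := by
              rw [add_pow, Finset.sum_mul]
              exact Finset.sum_congr rfl fun i _ => by ring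
      refine Summable.of_nonneg_of_le (fun p => abs_nonneg _) hle ?_
      refine summable_sum fun i _ => Summable.mul_left _ ?_
      refine Summable.mul_of_nonneg (f := fun g : Fin k → ℕ => |Af k lam g| ^ i * PP lam g)
        (g := fun m : ℕ => |Bf k lam m| ^ (n-i) * pois lam m) (hφ i) (hψ (n-i)) ?_ ?_
      · exact Pi.le_def.mpr fun g =>
          mul_nonneg (pow_nonneg (abs_nonneg _) _) (PP_nonneg hlam' g)
      · exact Pi.le_def.mpr fun m =>
          mul_nonneg (pow_nonneg (abs_nonneg _) _) (pois_nonneg hlam' m)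
    refine ⟨hsummax, fun n => ?_⟩
    have key : ∑' f : Fin (k+1) → ℕ, F (k+1) n lam f
        = ∑' p : (Fin k → ℕ) × ℕ, F (k+1) n lam ((snocEquiv k).symm p) :=
      ((snocEquiv k).symm.tsum_eq _).symm
    rw [key]
    have hpt : ∀ p : (Fin k → ℕ) × ℕ,
        F (k+1) n lam ((snocEquiv k).symm p)
          = ∑ i ∈ Finset.range (n+1), (n.choose i : ℝ) *
              ((Af k lam p.1 ^ i * PP lam p.1) * (Bf k lam p.2 ^ (n-i) * pois lam p.2)) := by
      rintro ⟨g, m⟩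
      show F (k+1) n lam (Fin.snoc g m) = _
      rw [F_snoc', add_pow, Finset.sum_mul]
      exact Finset.sum_congr rfl fun i _ => by ring
    rw [tsum_congr hpt]
    have hsm : ∀ i ∈ Finset.range (n+1), Summable (fun p : (Fin k → ℕ) × ℕ =>
        (n.choose i : ℝ) * ((Af k lam p.1 ^ i * PP lam p.1) *
          (Bf k lam p.2 ^ (n-i) * pois lam p.2))) := by
      intro i _
      exact (summable_mul_of_summable_norm (hφn i) (hψn (n-i))).mul_left _
    rw [Summable.tsum_finsetSum hsm]
    have hterm : ∀ i ∈ Finset.range (n+1),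
        (∑' p : (Fin k → ℕ) × ℕ, (n.choose i : ℝ) *
            ((Af k lam p.1 ^ i * PP lam p.1) * (Bf k lam p.2 ^ (n-i) * pois lam p.2)))
          = (n.choose i : ℝ) * ((Real.exp (k*lam) * (R k i).eval lam) *
              (((k:ℝ)+1)^(n-i) * (Real.exp lam * (Q (n-i)).eval lam))) := by
      intro i _
      rw [tsum_mul_left]
      congr 1
      rw [← tsum_mul_tsum_of_summable_norm (hφn i) (hψn (n-i))]
      congr 1
      · rw [← IH.2 i]
        exact tsum_congr fun g => (F_eq k i lam g).symm
      · calc ∑' m : ℕ, Bf k lam m ^ (n-i) * pois lam m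
            = ∑' m : ℕ, ((k:ℝ)+1)^(n-i) * (((m:ℝ)-lam)^(n-i) * pois lam m) :=
              tsum_congr fun m => by unfold Bf; rw [mul_pow]; ring
          _ = ((k:ℝ)+1)^(n-i) * cmom lam (n-i) := by rw [tsum_mul_left]; rfl
          _ = _ := by rw [cmom_eq hlam' (n-i)]
    rw [Finset.sum_congr rfl hterm]
    rw [R_succ, Polynomial.eval_finset_sum, Finset.mul_sum]
    refine Finset.sum_congr rfl fun i _ => ?_
    simp only [Polynomial.eval_smul, smul_eq_mul, Polynomial.eval_mul]
    have hexp : Real.exp (((k:ℕ)+1 : ℕ) * lam) = Real.exp ((k:ℝ)*lam) * Real.exp lam := by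
      rw [← Real.exp_add]
      congr 1
      push_cast
      ring
    rw [hexp]
    ring

end PKAux

namespace PKAux

lemma fiber_eq (k m : ℕ) :
    (Yw k) ⁻¹' {m} = ↑(Finset.filter (fun f : Fin k → ℕ => ∑ j : Fin k, (j.1 + 1) * f j = m)
        (Fintype.piFinset fun _ : Fin k => Finset.range (m + 1))) := by
  ext f
  simp only [Set.mem_preimage, Set.mem_singleton_iff, Finset.coe_filter, Set.mem_setOf_eq,
    Fintype.mem_piFinset, Finset.mem_range]
  constructor
  · intro h
    refine ⟨fun j => ?_, h⟩
    have h1 : f j ≤ (j.1+1) * f j := Nat.le_mul_of_pos_left _ (by omega)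
    have h2 : (j.1+1) * f j ≤ ∑ j' : Fin k, (j'.1+1) * f j' :=
      Finset.single_le_sum (f := fun j' : Fin k => (j'.1+1) * f j')
        (fun a _ => Nat.zero_le _) (Finset.mem_univ j)
    have h3 : Yw k f = m := h
    unfold Yw at h3
    omega
  · exact fun h => h.2

lemma Mk_eq (k : ℕ) (lam : ℝ) : (k:ℝ) * ((k:ℝ) + 1) * lam / 2 = Mk k lam := by
  have hnat : 2 * (∑ i ∈ Finset.range k, (i+1)) = k * (k+1) := by
    induction k with
    | zero => simp
    | succ k ih => rw [Finset.sum_range_succ, Nat.mul_add, ih]; ring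
  have hcast : ∑ j : Fin k, ((j.1 : ℝ) + 1) = ((∑ i ∈ Finset.range k, (i+1) : ℕ) : ℝ) := by
    rw [Fin.sum_univ_eq_sum_range (fun i => ((i:ℝ)+1)) k]
    push_cast
    ring
  unfold Mk
  rw [hcast]
  have hc : (k:ℝ) * ((k:ℝ)+1) = 2 * ((∑ i ∈ Finset.range k, (i+1) : ℕ) : ℝ) := by
    exact_mod_cast hnat.symm
  rw [← mul_comm ((((∑ i ∈ Finset.range k, (i+1) : ℕ)) : ℝ)) lam]
  rw [hc]
  ring

lemma centralMoment_eq (k n : ℕ) (lam : ℝ) (hlam : 0 < lam) :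
    centralMoment k lam n = Real.exp (-((k:ℝ)*lam)) * ∑' f : Fin k → ℕ, F k n lam f := by
  have hsum : Summable (F k n lam) := summable_abs_iff.mp ((main lam hlam k).1 n)
  have hfib := (hsum.hasSum.tsum_fiberwise (Yw k)).tsum_eq
  rw [centralMoment, ← hfib, ← tsum_mul_left]
  refine tsum_congr fun m => ?_
  have hfval : ∑' f : (Yw k) ⁻¹' {m}, F k n lam f
      = ((m:ℝ) - Mk k lam) ^ n *
        ∑ f ∈ Finset.filter (fun f : Fin k → ℕ => ∑ j : Fin k, (j.1 + 1) * f j = m)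
          (Fintype.piFinset fun _ : Fin k => Finset.range (m + 1)), PP lam f := by
    rw [fiber_eq, Finset.tsum_subtype', Finset.mul_sum]
    refine Finset.sum_congr rfl fun f hf => ?_
    simp only [Finset.mem_filter] at hf
    have hY : Yw k f = m := hf.2
    rw [F_eq]
    unfold Af
    rw [hY]
  rw [hfval]
  have hP : poissonK k lam m = Real.exp (-((k:ℝ)*lam)) *
      ∑ f ∈ Finset.filter (fun f : Fin k → ℕ => ∑ j : Fin k, (j.1 + 1) * f j = m)
        (Fintype.piFinset fun _ : Fin k => Finset.range (m + 1)), PP lam f := rfl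
  rw [hP, ← Mk_eq]
  ring

end PKAux

/-- For `n ≥ 2`, the `n`-th central moment of the Poisson distribution of order `k` is a
polynomial in `λ` of degree exactly `⌊n/2⌋`, with zero constant term, whose linear
coefficient equals `𝓢_n(k)`. -/
theorem poissonK_centralMoment_polynomial (k : ℕ) (hk : 1 ≤ k) (n : ℕ) (hn : 2 ≤ n) :
    ∃ p : Polynomial ℝ,
      p.natDegree = n / 2 ∧
      p.coeff 0 = 0 ∧
      p.coeff 1 = (powerSum k n : ℝ) ∧
      ∀ lam : ℝ, 0 < lam → centralMoment k lam n = p.eval lam := by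
  refine ⟨PKAux.R k n, ?_, ?_, ?_, ?_⟩
  · exact le_antisymm (PKAux.R_natDegree_le k n)
      (Polynomial.le_natDegree_of_ne_zero (ne_of_gt (PKAux.R_coeff_top k n hk hn)))
  · exact PKAux.R_coeff_zero k n (by omega)
  · rw [PKAux.R_coeff_one k n hn, powerSum]
    clear hk
    induction k with
    | zero => simp
    | succ k ih =>
      rw [Finset.sum_range_succ, Finset.sum_Icc_succ_top (by omega), ih]
      push_cast
      ring
  · intro lam hlam
    rw [PKAux.centralMoment_eq k n lam hlam, (PKAux.main lam hlam k).2 n,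
      ← mul_assoc, ← Real.exp_add, neg_add_cancel, Real.exp_zero, one_mul]
end
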